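/- Fix α > 0, T > 0 and ϖ with 1/2 < ϖ < 3/2. Suppose that on a probability space (Ω, F, P), for each n ≥ 1, (ξ_{n,1}, …, ξ_{n,n}) are independent real random variables each distributed as the centered Gaussian measure with variance Δ_n := T/n. Define U_n = Σ_{i=1}^{n} 1(|ξ_{n,i}| ≤ α Δ_n^{ϖ}). Then Δ_n^{3/2−ϖ} U_n converges in probability to 2αT/√(2π) as n → ∞. (This is the law of large numbers part of Theorem 1(1) under the null hypothesis H₀, in the case where the process is a standard Brownian motion, so that the increments are i.i.d. N(0, Δ_n): the normalized count of small increments converges to 2α·φ(0)·T.) -/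

import Mathlib

open MeasureTheory ProbabilityTheory Filter
open scoped NNReal ENNReal Real

lemma gauss_interval_bounds {v : ℝ≥0} (hv : v ≠ 0) {a : ℝ} (ha : 0 ≤ a) :
    2 * a * (Real.sqrt (2 * π * v))⁻¹ * Real.exp (-(a ^ 2) / (2 * v)) ≤
      ((gaussianReal 0 v) {x | |x| ≤ a}).toReal ∧
    ((gaussianReal 0 v) {x | |x| ≤ a}).toReal ≤ 2 * a * (Real.sqrt (2 * π * v))⁻¹ := by
  have hset : {x : ℝ | |x| ≤ a} = Set.Icc (-a) a := by ext x; simp [abs_le]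
  rw [hset, gaussianReal_apply_eq_integral 0 hv,
    ENNReal.toReal_ofReal (setIntegral_nonneg measurableSet_Icc
      (fun x _ => gaussianPDFReal_nonneg 0 v x))]
  have hvol : (volume (Set.Icc (-a) a)).toReal = 2 * a := by
    rw [Real.volume_Icc, ENNReal.toReal_ofReal (by linarith)]; ring
  have hint : IntegrableOn (gaussianPDFReal 0 v) (Set.Icc (-a) a) volume :=
    (integrable_gaussianPDFReal 0 v).integrableOn
  constructor
  · have hle : ∀ x ∈ Set.Icc (-a) a,
        (Real.sqrt (2 * π * ↑v))⁻¹ * Real.exp (-(a ^ 2) / (2 * ↑v)) ≤ gaussianPDFReal 0 v x := by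
      intro x hx
      rw [gaussianPDFReal]
      have hx2 : x ^ 2 ≤ a ^ 2 := sq_le_sq' hx.1 hx.2
      have : -(a ^ 2) / (2 * (v:ℝ)) ≤ -((x - 0) ^ 2) / (2 * v) := by
        apply div_le_div_of_nonneg_right ?_ (by positivity) |>.trans_eq rfl
        · nlinarith
      gcongr
    calc 2 * a * (Real.sqrt (2 * π * ↑v))⁻¹ * Real.exp (-(a ^ 2) / (2 * ↑v))
        = ∫ _ in Set.Icc (-a) a,
            (Real.sqrt (2 * π * ↑v))⁻¹ * Real.exp (-(a ^ 2) / (2 * ↑v)) := by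
          rw [setIntegral_const, smul_eq_mul, measureReal_def, hvol]; ring
      _ ≤ ∫ x in Set.Icc (-a) a, gaussianPDFReal 0 v x :=
          setIntegral_mono_on (integrableOn_const (by simp [Real.volume_Icc]))
            hint measurableSet_Icc hle
  · have hle : ∀ x ∈ Set.Icc (-a) a,
        gaussianPDFReal 0 v x ≤ (Real.sqrt (2 * π * ↑v))⁻¹ := by
      intro x hx
      rw [gaussianPDFReal]
      have : Real.exp (-(x - 0) ^ 2 / (2 * ↑v)) ≤ 1 := by
        apply Real.exp_le_one_iff.2
        apply div_nonpos_of_nonpos_of_nonneg (by nlinarith [sq_nonneg (x - 0)]) (by positivity)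
      calc (Real.sqrt (2 * π * ↑v))⁻¹ * Real.exp (-(x - 0) ^ 2 / (2 * ↑v))
          ≤ (Real.sqrt (2 * π * ↑v))⁻¹ * 1 := by gcongr
        _ = _ := mul_one _
    calc ∫ x in Set.Icc (-a) a, gaussianPDFReal 0 v x
        ≤ ∫ _ in Set.Icc (-a) a, (Real.sqrt (2 * π * ↑v))⁻¹ :=
          setIntegral_mono_on hint (integrableOn_const (by simp [Real.volume_Icc]))
            measurableSet_Icc hle
      _ = 2 * a * (Real.sqrt (2 * π * ↑v))⁻¹ := by
          rw [setIntegral_const, smul_eq_mul, measureReal_def, hvol]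

lemma mean_bounds (α ϖ : ℝ) (hα : 0 < α) {d : ℝ} (hd : 0 < d) :
    2 * α / Real.sqrt (2 * π) * Real.exp (-(α ^ 2 * d ^ (2 * ϖ - 1)) / 2) ≤
      d ^ ((1:ℝ) / 2 - ϖ) * ((gaussianReal 0 d.toNNReal) {x | |x| ≤ α * d ^ ϖ}).toReal ∧
    d ^ ((1:ℝ) / 2 - ϖ) * ((gaussianReal 0 d.toNNReal) {x | |x| ≤ α * d ^ ϖ}).toReal ≤
      2 * α / Real.sqrt (2 * π) := by
  have hv : d.toNNReal ≠ 0 := by simp [Real.toNNReal_eq_zero, hd, not_le]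
  have hvc : ((d.toNNReal : ℝ)) = d := Real.coe_toNNReal _ hd.le
  have ha : 0 ≤ α * d ^ ϖ := by positivity
  obtain ⟨h1, h2⟩ := gauss_interval_bounds hv ha
  rw [hvc] at h1 h2
  have hdpow : (0:ℝ) < d ^ ((1:ℝ)/2 - ϖ) := Real.rpow_pos_of_pos hd _
  have e1 : d ^ ((1:ℝ)/2 - ϖ) * (2 * (α * d ^ ϖ) * (Real.sqrt (2 * π * d))⁻¹)
      = 2 * α / Real.sqrt (2 * π) := by
    rw [show (2:ℝ) * π * d = (2*π) * d by ring, Real.sqrt_mul (by positivity),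
      mul_inv, Real.sqrt_eq_rpow d, ← Real.rpow_neg hd.le,
      show -((1:ℝ)/2) = (-1:ℝ)/2 by norm_num]
    rw [show d ^ ((1:ℝ)/2 - ϖ) * (2 * (α * d ^ ϖ) * ((Real.sqrt (2*π))⁻¹ * d ^ ((-1:ℝ)/2)))
      = 2 * α * (Real.sqrt (2*π))⁻¹ * (d ^ ((1:ℝ)/2 - ϖ) * d ^ ϖ * d ^ ((-1:ℝ)/2)) by ring]
    rw [← Real.rpow_add hd, ← Real.rpow_add hd]
    norm_num
    ring
  have e2 : -((α * d ^ ϖ) ^ 2) / (2 * d) = -(α ^ 2 * d ^ (2 * ϖ - 1)) / 2 := by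
    have : (α * d ^ ϖ) ^ 2 = α ^ 2 * (d ^ (2 * ϖ - 1) * d) := by
      rw [mul_pow, sq (d ^ ϖ), ← Real.rpow_add hd,
        show d ^ (2*ϖ-1) * d = d ^ (2*ϖ-1) * d ^ (1:ℝ) by rw [Real.rpow_one],
        ← Real.rpow_add hd]
      ring_nf
    rw [this]
    field_simp
  constructor
  · calc 2 * α / Real.sqrt (2 * π) * Real.exp (-(α ^ 2 * d ^ (2 * ϖ - 1)) / 2)
        = d ^ ((1:ℝ)/2 - ϖ) * (2 * (α * d ^ ϖ) * (Real.sqrt (2 * π * d))⁻¹ *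
            Real.exp (-((α * d ^ ϖ) ^ 2) / (2 * d))) := by rw [e2, ← e1]; ring
      _ ≤ _ := by gcongr
  · calc d ^ ((1:ℝ)/2 - ϖ) * ((gaussianReal 0 d.toNNReal) {x | |x| ≤ α * d ^ ϖ}).toReal
        ≤ d ^ ((1:ℝ)/2 - ϖ) * (2 * (α * d ^ ϖ) * (Real.sqrt (2 * π * d))⁻¹) := by gcongr
      _ = _ := e1

/-- Law of large numbers part of Theorem 1(1) under `H₀` for a standard Brownian motion:
if for each `n` the increments `ξ_{n,1}, …, ξ_{n,n}` are i.i.d. `N(0, Δ_n)` with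
`Δ_n = T/n`, then the normalized small-increment count
`Δ_n^{3/2−ϖ} Σ_{i=1}^n 1(|ξ_{n,i}| ≤ αΔ_n^ϖ)` converges in probability to
`2αT/√(2π) = 2α φ(0) T`. -/
theorem small_increment_count_lln
    {Ω : Type*} [MeasurableSpace Ω] (P : Measure Ω) [IsProbabilityMeasure P]
    (α T ϖ : ℝ) (hα : 0 < α) (hT : 0 < T) (hϖ1 : 1 / 2 < ϖ) (hϖ2 : ϖ < 3 / 2)
    (ξ : ℕ → ℕ → Ω → ℝ)
    (hmeas : ∀ n i, Measurable (ξ n i))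
    (hindep : ∀ n, iIndepFun
      (fun i : Fin n => ξ n (i : ℕ)) P)
    (hdist : ∀ n i, 1 ≤ n → i < n →
      Measure.map (ξ n i) P = gaussianReal 0 (T / (n : ℝ)).toNNReal) :
    TendstoInMeasure P
      (fun (n : ℕ) ω => (T / (n : ℝ)) ^ ((3 : ℝ) / 2 - ϖ) *
        ∑ i ∈ Finset.range n, (if |ξ n i ω| ≤ α * (T / (n : ℝ)) ^ ϖ then (1 : ℝ) else 0))
      atTop
      (fun _ => 2 * α * T / Real.sqrt (2 * Real.pi)) := by
  -- notation
  set γ : ℝ := (3:ℝ)/2 - ϖ with hγdef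
  have hγpos : 0 < γ := by simp only [hγdef]; linarith
  set c : ℝ := 2 * α * T / Real.sqrt (2 * π) with hcdef
  set p : ℕ → ℝ := fun n =>
    ((gaussianReal 0 (T / (n:ℝ)).toNNReal) {x | |x| ≤ α * (T / (n:ℝ)) ^ ϖ}).toReal with hpdef
  set m : ℕ → ℝ := fun n => T * ((T / (n:ℝ)) ^ ((1:ℝ)/2 - ϖ) * p n) with hmdef
  have hΔpos : ∀ n : ℕ, 1 ≤ n → 0 < T / (n:ℝ) := fun n hn =>
    div_pos hT (by exact_mod_cast Nat.pos_of_ne_zero (by omega))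
  have hΔ0 : Tendsto (fun n : ℕ => T / (n:ℝ)) atTop (nhds 0) :=
    tendsto_const_div_atTop_nhds_zero_nat T
  -- limit of the mean
  have hrpow0 : ∀ q : ℝ, 0 < q →
      Tendsto (fun n : ℕ => (T / (n:ℝ)) ^ q) atTop (nhds 0) := by
    intro q hq
    have h := (Real.continuousAt_rpow_const 0 q (Or.inr hq.le)).tendsto
    rw [Real.zero_rpow hq.ne'] at h
    exact h.comp hΔ0
  have hm : Tendsto m atTop (nhds c) := by
    have hq : (0:ℝ) < 2 * ϖ - 1 := by linarith
    have h1 : Tendsto (fun n : ℕ => (T / (n:ℝ)) ^ (2*ϖ-1)) atTop (nhds 0) := hrpow0 _ hq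
    have hexp : Tendsto
        (fun n : ℕ => Real.exp (-(α ^ 2 * (T / (n:ℝ)) ^ (2*ϖ-1)) / 2)) atTop (nhds 1) := by
      have h2 : Tendsto
          (fun n : ℕ => -(α ^ 2 * (T / (n:ℝ)) ^ (2*ϖ-1)) / 2) atTop (nhds 0) := by
        have := ((h1.const_mul (α ^ 2)).neg).div_const 2
        simpa using this
      have := (Real.continuous_exp.tendsto 0).comp h2
      simpa [Function.comp_def] using this
    have hlow : Tendsto
        (fun n : ℕ => T * (2 * α / Real.sqrt (2 * π)) *
          Real.exp (-(α ^ 2 * (T / (n:ℝ)) ^ (2*ϖ-1)) / 2)) atTop (nhds c) := by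
      have := hexp.const_mul (T * (2 * α / Real.sqrt (2 * π)))
      rw [mul_one] at this
      convert this using 2
      rw [hcdef]; ring
    have hub : c = T * (2 * α / Real.sqrt (2 * π)) := by rw [hcdef]; ring
    have hconst : Tendsto (fun _ : ℕ => T * (2 * α / Real.sqrt (2 * π))) atTop (nhds c) := by
      rw [hub]; exact tendsto_const_nhds
    have hlo : ∀ᶠ n : ℕ in atTop, T * (2 * α / Real.sqrt (2 * π)) *
        Real.exp (-(α ^ 2 * (T / (n:ℝ)) ^ (2*ϖ-1)) / 2) ≤ m n := by
      filter_upwards [eventually_ge_atTop 1] with n hn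
      have h := (mean_bounds α ϖ hα (hΔpos n hn)).1
      calc T * (2 * α / Real.sqrt (2 * π)) *
            Real.exp (-(α ^ 2 * (T / (n:ℝ)) ^ (2*ϖ-1)) / 2)
          = T * (2 * α / Real.sqrt (2 * π) *
              Real.exp (-(α ^ 2 * (T / (n:ℝ)) ^ (2*ϖ-1)) / 2)) := by ring
        _ ≤ m n := by
            simp only [hmdef]
            exact mul_le_mul_of_nonneg_left h hT.le
    have hhi : ∀ᶠ n : ℕ in atTop, m n ≤ T * (2 * α / Real.sqrt (2 * π)) := by
      filter_upwards [eventually_ge_atTop 1] with n hn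
      have h := (mean_bounds α ϖ hα (hΔpos n hn)).2
      simp only [hmdef]
      exact mul_le_mul_of_nonneg_left h hT.le
    exact tendsto_of_tendsto_of_tendsto_of_le_of_le' hlow hconst hlo hhi
  -- key identity relating m and the normalized mean
  have key : ∀ n : ℕ, 1 ≤ n → (T / (n:ℝ)) ^ γ * ((n:ℝ) * p n) = m n := by
    intro n hn
    have hd : 0 < T / (n:ℝ) := hΔpos n hn
    have hnne : ((n:ℝ)) ≠ 0 := by exact_mod_cast Nat.pos_of_ne_zero (by omega) |>.ne'
    have e : (T / (n:ℝ)) ^ γ * (n:ℝ) = T * (T / (n:ℝ)) ^ ((1:ℝ)/2 - ϖ) := by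
      rw [show γ = ((1:ℝ)/2 - ϖ) + 1 by rw [hγdef]; ring, Real.rpow_add hd, Real.rpow_one,
        mul_assoc, div_mul_cancel₀ T hnne]
      ring
    simp only [hmdef]
    rw [← mul_assoc, e]
    ring
  -- Chebyshev bound
  have cheb : ∀ n : ℕ, 1 ≤ n → ∀ δ : ℝ, 0 < δ →
      P {ω | δ ≤ |(∑ i ∈ Finset.range n,
          (if |ξ n i ω| ≤ α * (T / (n:ℝ)) ^ ϖ then (1:ℝ) else 0)) - (n:ℝ) * p n|}
        ≤ ENNReal.ofReal ((n:ℝ) * p n / δ ^ 2) := by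
    intro n hn δ hδ
    set a : ℝ := α * (T / (n:ℝ)) ^ ϖ with hadef
    have hA : MeasurableSet {x : ℝ | |x| ≤ a} :=
      measurableSet_le (measurable_abs) measurable_const
    set g : ℝ → ℝ := fun x => if |x| ≤ a then 1 else 0 with hgdef
    have hg : Measurable g := Measurable.ite hA measurable_const measurable_const
    set Y : ℕ → Ω → ℝ := fun i ω => g (ξ n i ω) with hYdef
    have hYmeas : ∀ i, Measurable (Y i) := fun i => hg.comp (hmeas n i)
    have hYL2 : ∀ i, MemLp (Y i) 2 P := by
      intro i
      apply MemLp.of_bound (hYmeas i).aestronglyMeasurable 1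
      filter_upwards with ω
      rw [hYdef]; simp only [hgdef]
      split_ifs <;> simp
    have hEY : ∀ i, i < n → P[Y i] = p n := by
      intro i hi
      have hYind : Y i = (ξ n i ⁻¹' {x | |x| ≤ a}).indicator (fun _ => (1:ℝ)) := by
        funext ω
        by_cases h : |ξ n i ω| ≤ a
        · rw [Set.indicator_of_mem (by simpa using h)]
          simp [hYdef, hgdef, h]
        · rw [Set.indicator_of_notMem (by simpa using h)]
          simp [hYdef, hgdef, h]
      rw [hYind, integral_indicator_const (1:ℝ) ((hmeas n i) hA), smul_eq_mul, mul_one, measureReal_def,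
        ← Measure.map_apply (hmeas n i) hA, hdist n i hn hi, hpdef]
    have hYsq : ∀ i, (Y i) ^ 2 = Y i := by
      intro i; funext ω
      simp only [Pi.pow_apply, hYdef, hgdef]
      split_ifs <;> norm_num
    have hVarY : ∀ i, i < n → variance (Y i) P ≤ p n := by
      intro i hi
      rw [variance_eq_sub (hYL2 i), hYsq i, hEY i hi]
      nlinarith [sq_nonneg (p n)]
    have hpair : Set.Pairwise ↑(Finset.range n) (fun i j => IndepFun (Y i) (Y j) P) := by
      intro i hi j hj hij
      simp only [Finset.coe_range, Set.mem_Iio] at hi hj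
      have hne : (⟨i, hi⟩ : Fin n) ≠ ⟨j, hj⟩ := by simp [Fin.ext_iff, hij]
      have := (hindep n).indepFun hne
      exact this.comp hg hg
    set S : Ω → ℝ := ∑ i ∈ Finset.range n, Y i with hSdef
    have hSL2 : MemLp S 2 P := memLp_finsetSum' _ (fun i _ => hYL2 i)
    have hES : P[S] = (n:ℝ) * p n := by
      simp only [hSdef, Finset.sum_apply]
      rw [integral_finset_sum _ (fun i hi => (hYL2 i).integrable one_le_two)]
      rw [Finset.sum_congr rfl (fun i hi => hEY i (Finset.mem_range.mp hi)),
        Finset.sum_const, Finset.card_range, nsmul_eq_mul]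
    have hVarS : variance S P ≤ (n:ℝ) * p n := by
      rw [hSdef, IndepFun.variance_sum (fun i _ => hYL2 i) hpair]
      calc ∑ i ∈ Finset.range n, variance (Y i) P
          ≤ ∑ i ∈ Finset.range n, p n :=
            Finset.sum_le_sum (fun i hi => hVarY i (Finset.mem_range.mp hi))
        _ = (n:ℝ) * p n := by rw [Finset.sum_const, Finset.card_range, nsmul_eq_mul]
    have hsetEq : {ω | δ ≤ |(∑ i ∈ Finset.range n,
          (if |ξ n i ω| ≤ α * (T / (n:ℝ)) ^ ϖ then (1:ℝ) else 0)) - (n:ℝ) * p n|}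
        = {ω | δ ≤ |S ω - (n:ℝ) * p n|} := by
      ext ω
      simp only [Set.mem_setOf_eq, hSdef, Finset.sum_apply, hYdef, hgdef, hadef]
    have hcheb := meas_ge_le_variance_div_sq (X := S) hSL2 hδ
    rw [hES] at hcheb
    rw [hsetEq]
    calc P {ω | δ ≤ |S ω - (n:ℝ) * p n|}
        ≤ ENNReal.ofReal (variance S P / δ ^ 2) := hcheb
      _ ≤ ENNReal.ofReal ((n:ℝ) * p n / δ ^ 2) := by
          apply ENNReal.ofReal_le_ofReal
          gcongr
  -- assemble
  rw [tendstoInMeasure_iff_dist]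
  intro ε hε
  have hmev : ∀ᶠ n in atTop, |m n - c| < ε / 2 := by
    have := hm.eventually (Metric.ball_mem_nhds c (by positivity : (0:ℝ) < ε / 2))
    filter_upwards [this] with n hn
    simpa [Real.dist_eq] using hn
  apply tendsto_of_tendsto_of_tendsto_of_le_of_le'
    (tendsto_const_nhds : Tendsto (fun _ : ℕ => (0:ℝ≥0∞)) atTop (nhds 0))
    (show Tendsto (fun n : ℕ => ENNReal.ofReal ((T / (n:ℝ)) ^ γ * m n / (ε/2) ^ 2))
        atTop (nhds 0) from ?_)
  · exact Eventually.of_forall fun n => zero_le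
  · filter_upwards [eventually_ge_atTop 1, hmev] with n hn hmn
    have hd : 0 < T / (n:ℝ) := hΔpos n hn
    have hDγ : 0 < (T / (n:ℝ)) ^ γ := Real.rpow_pos_of_pos hd _
    set δ : ℝ := (ε/2) / (T / (n:ℝ)) ^ γ with hδdef
    have hδpos : 0 < δ := by positivity
    calc P {ω | ε ≤ dist ((T / (n:ℝ)) ^ γ *
            ∑ i ∈ Finset.range n, (if |ξ n i ω| ≤ α * (T / (n:ℝ)) ^ ϖ then (1:ℝ) else 0)) c}
        ≤ P {ω | δ ≤ |(∑ i ∈ Finset.range n,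
            (if |ξ n i ω| ≤ α * (T / (n:ℝ)) ^ ϖ then (1:ℝ) else 0)) - (n:ℝ) * p n|} := by
          apply measure_mono
          intro ω hω
          simp only [Set.mem_setOf_eq, Real.dist_eq] at hω ⊢
          set s : ℝ := ∑ i ∈ Finset.range n,
            (if |ξ n i ω| ≤ α * (T / (n:ℝ)) ^ ϖ then (1:ℝ) else 0) with hsdef
          have h1 : ε / 2 ≤ |(T / (n:ℝ)) ^ γ * s - m n| := by
            have habs : |(T / (n:ℝ)) ^ γ * s - c| ≤
                |(T / (n:ℝ)) ^ γ * s - m n| + |m n - c| := abs_sub_le _ _ _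
            linarith
          rw [← key n hn] at h1
          rw [show (T / (n:ℝ)) ^ γ * s - (T / (n:ℝ)) ^ γ * ((n:ℝ) * p n)
              = (T / (n:ℝ)) ^ γ * (s - (n:ℝ) * p n) by ring, abs_mul,
            abs_of_pos hDγ] at h1
          rw [hδdef, div_le_iff₀ hDγ]
          linarith [h1]
      _ ≤ ENNReal.ofReal ((n:ℝ) * p n / δ ^ 2) := cheb n hn δ hδpos
      _ = ENNReal.ofReal ((T / (n:ℝ)) ^ γ * m n / (ε/2) ^ 2) := by
          congr 1
          rw [← key n hn, hδdef]
          field_simp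
  · have hreal : Tendsto (fun n : ℕ => (T / (n:ℝ)) ^ γ * m n / (ε/2) ^ 2)
        atTop (nhds 0) := by
      have := ((hrpow0 γ hγpos).mul hm).div_const ((ε/2) ^ 2)
      simpa using this
    have := (ENNReal.continuous_ofReal.tendsto 0).comp hreal
    simpa [Function.comp_def] using this
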